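/- For all positive reals a, b, c and every positive real x, the inequality a/(b + c·x) + b/(c + a·x) + c/(a + b·x) ≥ 3x/(1 + x³) holds (the Mavlo–Georgiev inequality). -/

import Mathlib

lemma cauchy3 (a b c u v w : ℝ) (hu : 0 < u) (hv : 0 < v) (hw : 0 < w) :
    (a + b + c) ^ 2 / (u + v + w) ≤ a ^ 2 / u + b ^ 2 / v + c ^ 2 / w := by
  rw [div_add_div _ _ (ne_of_gt hu) (ne_of_gt hv), div_add_div _ _ (by positivity) (ne_of_gt hw),
    div_le_div_iff₀ (by positivity) (by positivity)]
  nlinarith [sq_nonneg (a * v - b * u), sq_nonneg (a * w - c * u), sq_nonneg (b * w - c * v),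
    mul_pos hu hv, mul_pos hv hw, mul_pos hu hw, sq_nonneg a, sq_nonneg b, sq_nonneg c]

theorem mavlo_georgiev (a b c x : ℝ) (ha : 0 < a) (hb : 0 < b) (hc : 0 < c) (hx : 0 < x) :
    a / (b + c * x) + b / (c + a * x) + c / (a + b * x) ≥ 3 * x / (1 + x ^ 3) := by
  have h1 : 0 < b + c * x := by positivity
  have h2 : 0 < c + a * x := by positivity
  have h3 : 0 < a + b * x := by positivity
  have key : a / (b + c * x) + b / (c + a * x) + c / (a + b * x) ≥ 3 / (1 + x) := by
    have e1 : a / (b + c * x) = a ^ 2 / (a * (b + c * x)) := by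
      field_simp
    have e2 : b / (c + a * x) = b ^ 2 / (b * (c + a * x)) := by
      field_simp
    have e3 : c / (a + b * x) = c ^ 2 / (c * (a + b * x)) := by
      field_simp
    rw [e1, e2, e3]
    have hC := cauchy3 a b c (a * (b + c * x)) (b * (c + a * x)) (c * (a + b * x))
      (by positivity) (by positivity) (by positivity)
    refine le_trans ?_ hC
    have hS : 0 < a * b + b * c + c * a := by positivity
    have hden : a * (b + c * x) + b * (c + a * x) + c * (a + b * x)
        = (1 + x) * (a * b + b * c + c * a) := by ring
    rw [hden, div_le_div_iff₀ (by positivity) (by positivity)]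
    nlinarith [sq_nonneg (a - b), sq_nonneg (b - c), sq_nonneg (a - c), hx.le]
  refine le_trans ?_ key
  rw [div_le_div_iff₀ (by positivity) (by positivity)]
  nlinarith [mul_nonneg (sq_nonneg (1 - x)) (by positivity : (0:ℝ) ≤ 1 + x)]
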